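/- Let k ≥ 1 and let s and s' be any two barred states each having a k-fuse. Then for every finite sequence (j_1,…,j_m) of positive integers with j_t ≤ k for all t: the sequence is playable from s if and only if it is playable from s'. (In particular, the tree of plays using only positions 1,…,k from a state with a k-fuse depends only on k, not on the particular state.) -/

import Mathlib

/-- A barred state: a sequence `μ` of natural numbers indexed by the positive
integers (the value at `0` is irrelevant) together with a set `S` of barred
positions, all positive and with `μ_j ≠ 0` for `j ∈ S`. -/
structure BarredState where
  mu : ℕ → ℕ
  bars : Set ℕ
  bars_pos : ∀ j ∈ bars, 1 ≤ j
  bars_ne : ∀ j ∈ bars, mu j ≠ 0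

/-- The sequence obtained from `μ` by the move `R_j`:
`μ'_i = μ_i` for `i < j-1`, `μ'_{j-1} = μ_{j-1} + μ_j`, and `μ'_i = μ_{i+1}` for `i ≥ j`. -/
def moveMu (mu : ℕ → ℕ) (j : ℕ) : ℕ → ℕ := fun i =>
  if i < j - 1 then mu i
  else if i = j - 1 then mu (j - 1) + mu j
  else mu (i + 1)

/-- The move `R_j` on barred states: the new barred set is
`{i : 1 ≤ i ≤ j-1, μ'_i ≠ 0} ∪ {i ≥ j : μ'_i ≠ 0 and μ_j + ⋯ + μ_i < 3}`. -/
def BarredState.move (s : BarredState) (j : ℕ) : BarredState where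
  mu := moveMu s.mu j
  bars :=
    {i | 1 ≤ i ∧ i ≤ j - 1 ∧ moveMu s.mu j i ≠ 0} ∪
    {i | 1 ≤ i ∧ j ≤ i ∧ moveMu s.mu j i ≠ 0 ∧ (∑ t ∈ Finset.Icc j i, s.mu t) < 3}
  bars_pos := by
    rintro i (⟨h, -, -⟩ | ⟨h, -, -, -⟩) <;> exact h
  bars_ne := by
    rintro i (⟨-, -, h⟩ | ⟨-, -, h, -⟩) <;> exact h

/-- A finite sequence `(j_1, …, j_m)` is playable from `s` if `j_1` is barred in `s`
and `(j_2, …, j_m)` is playable from `R_{j_1}(s)`. -/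
def PlayableSeq : BarredState → List ℕ → Prop
  | _, [] => True
  | s, j :: js => j ∈ s.bars ∧ PlayableSeq (s.move j) js

/-- The state obtained by playing a sequence of moves. -/
def playAll : BarredState → List ℕ → BarredState
  | s, [] => s
  | s, j :: js => playAll (s.move j) js

-- auxiliary development
structure Desc where
  p : ℕ
  b : ℕ
  T : ℕ → Bool

def Good (K : ℕ) (d : Desc) (s : BarredState) : Prop :=
  d.b ≤ K ∧
  (∀ i, 1 ≤ i → i ≤ K → (i ∈ s.bars ↔ i ≤ d.b)) ∧
  (1 ≤ d.b →
    d.b ≤ d.p ∧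
    (∀ i, 1 ≤ i → i ≤ d.p → s.mu i ≠ 0) ∧
    (∀ i, 1 ≤ i → i + 1 ≤ d.p → 3 ≤ s.mu i + s.mu (i + 1)) ∧
    3 ≤ s.mu d.p ∧
    (∀ i, 1 ≤ i → i ≤ d.p → (d.T i = true ↔ s.mu i < 3)))

def step (d : Desc) (j : ℕ) : Desc :=
  ⟨d.p - 1, if d.T j then j else j - 1,
   fun i => (decide (i + 1 < j) && d.T i) || (decide (j ≤ i) && d.T (i + 1))⟩

lemma step_p (d : Desc) (j : ℕ) : (step d j).p = d.p - 1 := rfl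

lemma step_b (d : Desc) (j : ℕ) : (step d j).b = if d.T j then j else j - 1 := rfl

lemma step_T (d : Desc) (j i : ℕ) :
    ((step d j).T i = true) ↔ ((i + 1 < j ∧ d.T i = true) ∨ (j ≤ i ∧ d.T (i + 1) = true)) := by
  simp [step]

lemma mm_lt (mu : ℕ → ℕ) (j i : ℕ) (h : i < j - 1) : moveMu mu j i = mu i := by
  simp [moveMu, h]

lemma mm_eq (mu : ℕ → ℕ) (j : ℕ) : moveMu mu j (j - 1) = mu (j - 1) + mu j := by
  simp [moveMu]

lemma mm_ge (mu : ℕ → ℕ) (j i : ℕ) (hj : 1 ≤ j) (h : j ≤ i) :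
    moveMu mu j i = mu (i + 1) := by
  have h1 : ¬ i < j - 1 := by omega
  have h2 : i ≠ j - 1 := by omega
  simp [moveMu, h1, h2]

lemma sum_pair_le (mu : ℕ → ℕ) (j i : ℕ) (h : j + 1 ≤ i) :
    mu j + mu (j + 1) ≤ ∑ t ∈ Finset.Icc j i, mu t := by
  have : ∑ t ∈ Finset.Icc j (j + 1), mu t = mu j + mu (j + 1) := by
    rw [Finset.sum_Icc_succ_top (by omega), Finset.Icc_self, Finset.sum_singleton]
  rw [← this]
  exact Finset.sum_le_sum_of_subset (Finset.Icc_subset_Icc_right h)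

lemma sum_single_le (mu : ℕ → ℕ) (j i : ℕ) (h : j ≤ i) :
    mu j ≤ ∑ t ∈ Finset.Icc j i, mu t := by
  have : ∑ t ∈ Finset.Icc j j, mu t = mu j := by
    rw [Finset.Icc_self, Finset.sum_singleton]
  rw [← this]
  exact Finset.sum_le_sum_of_subset (Finset.Icc_subset_Icc_right h)

lemma step_good (K : ℕ) (d : Desc) (s : BarredState) (hg : Good K d s)
    (j : ℕ) (hj1 : 1 ≤ j) (hjb : j ≤ d.b) :
    Good K (step d j) (s.move j) := by
  obtain ⟨hbK, hbars, hlive⟩ := hg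
  have hb1 : 1 ≤ d.b := le_trans hj1 hjb
  obtain ⟨hbp, hne, hpair, hbig, hT⟩ := hlive hb1
  have hjp : j ≤ d.p := le_trans hjb hbp
  have hpT : d.T d.p = false := by
    rcases Bool.eq_false_or_eq_true (d.T d.p) with h | h
    · have := (hT d.p (le_trans hb1 hbp) (le_refl _)).mp h
      omega
    · exact h
  -- sums
  have hsum_big : ∀ i, j < i → ¬ ((∑ t ∈ Finset.Icc j i, s.mu t) < 3) := by
    intro i hi hlt
    by_cases hjq : j = d.p
    · subst hjq
      have := sum_single_le s.mu d.p i (le_of_lt hi)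
      omega
    · have h3 : 3 ≤ s.mu j + s.mu (j + 1) := hpair j hj1 (by omega)
      have := sum_pair_le s.mu j i hi
      omega
  have hsum_self : (∑ t ∈ Finset.Icc j j, s.mu t) = s.mu j := by
    rw [Finset.Icc_self, Finset.sum_singleton]
  -- if j is small then j < p
  have hjsmall : d.T j = true → j < d.p := by
    intro h
    rcases lt_or_eq_of_le hjp with h2 | h2
    · exact h2
    · rw [h2] at h; rw [hpT] at h; exact absurd h (by simp)
  have hsb : (step d j).b ≤ j := by
    rw [step_b]
    split <;> omega
  -- characterization of new bars
  have hbars' : ∀ i, 1 ≤ i → (i ∈ (s.move j).bars ↔ i ≤ (step d j).b) := by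
    intro i hi1
    rw [step_b]
    constructor
    · rintro (⟨-, hij, -⟩ | ⟨-, hji, -, hsum⟩)
      · split <;> omega
      · rcases lt_or_eq_of_le hji with hlt | hij
        · exact absurd hsum (hsum_big i hlt)
        · rw [← hij] at hsum ⊢
          rw [hsum_self] at hsum
          have hT' : d.T j = true := (hT j hj1 hjp).mpr hsum
          rw [if_pos hT']
    · intro hib
      by_cases hij : i ≤ j - 1
      · left
        refine ⟨hi1, hij, ?_⟩
        rcases lt_or_eq_of_le hij with h | h
        · rw [mm_lt s.mu j i h]
          exact hne i hi1 (by omega)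
        · rw [h, mm_eq]
          have := hne j hj1 hjp
          omega
      · have hTj : d.T j = true := by
          rcases Bool.eq_false_or_eq_true (d.T j) with h | h
          · exact h
          · rw [h] at hib
            simp only [Bool.false_eq_true, if_false] at hib
            omega
        rw [if_pos hTj] at hib
        have hij' : i = j := by omega
        have hjlt : j < d.p := hjsmall hTj
        right
        refine ⟨hi1, by omega, ?_, ?_⟩
        · rw [hij', mm_ge s.mu j j hj1 (le_refl j)]
          exact hne (j + 1) (by omega) (by omega)
        · rw [hij', hsum_self]
          exact (hT j hj1 hjp).mp hTj
  refine ⟨le_trans hsb (le_trans hjb hbK), fun i hi1 _ => hbars' i hi1, ?_⟩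
  -- live part
  intro hb'1
  rw [step_p]
  have hbp' : (step d j).b ≤ d.p - 1 := by
    rw [step_b]
    by_cases h : d.T j = true
    · rw [if_pos h]
      have := hjsmall h
      omega
    · rw [if_neg h]; omega
  refine ⟨hbp', ?_, ?_, ?_, ?_⟩
  · -- nonzero
    intro i hi1 hip
    show moveMu s.mu j i ≠ 0
    by_cases h : i < j - 1
    · rw [mm_lt s.mu j i h]; exact hne i hi1 (by omega)
    · by_cases h2 : i = j - 1
      · rw [h2, mm_eq]
        have := hne j hj1 hjp
        omega
      · rw [mm_ge s.mu j i hj1 (by omega)]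
        exact hne (i + 1) (by omega) (by omega)
  · -- pairs
    intro i hi1 hip
    show 3 ≤ moveMu s.mu j i + moveMu s.mu j (i + 1)
    by_cases h : i + 1 < j - 1
    · rw [mm_lt s.mu j i (by omega), mm_lt s.mu j (i + 1) h]
      exact hpair i hi1 (by omega)
    · by_cases h2 : i + 1 = j - 1
      · rw [mm_lt s.mu j i (by omega), h2, mm_eq]
        have := hpair i hi1 (by omega)
        rw [h2] at this
        omega
      · by_cases h3 : i = j - 1
        · have hij : 2 ≤ j := by omega
          have e : j - 1 + 1 = j := by omega
          rw [h3, mm_eq, mm_ge s.mu j (j - 1 + 1) hj1 (by omega), e]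
          have := hpair j hj1 (by omega)
          omega
        · rw [mm_ge s.mu j i hj1 (by omega), mm_ge s.mu j (i + 1) hj1 (by omega)]
          exact hpair (i + 1) (by omega) (by omega)
  · -- big at new barrier
    show 3 ≤ moveMu s.mu j (d.p - 1)
    by_cases h : j = d.p
    · have h2 : d.p - 1 = j - 1 := by omega
      rw [h2, mm_eq]
      have hb3 : 3 ≤ s.mu j := by rw [h]; exact hbig
      omega
    · rw [mm_ge s.mu j (d.p - 1) hj1 (by omega)]
      have : d.p - 1 + 1 = d.p := by omega
      rw [this]
      exact hbig
  · -- smallness characterization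
    intro i hi1 hip
    have hp1 : 1 ≤ d.p - 1 := le_trans hb'1 hbp'
    rw [step_T]
    show _ ↔ moveMu s.mu j i < 3
    by_cases h : i < j - 1
    · rw [mm_lt s.mu j i h]
      constructor
      · rintro (⟨-, h2⟩ | ⟨h2, -⟩)
        · exact (hT i hi1 (by omega)).mp h2
        · omega
      · intro h2; exact Or.inl ⟨by omega, (hT i hi1 (by omega)).mpr h2⟩
    · by_cases h2 : i = j - 1
      · rw [h2, mm_eq]
        have := hpair (j - 1) (by omega) (by omega)
        have hjj : j - 1 + 1 = j := by omega
        rw [hjj] at this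
        constructor
        · rintro (⟨h3, -⟩ | ⟨h3, -⟩) <;> omega
        · intro h3; exact absurd h3 (by omega)
      · rw [mm_ge s.mu j i hj1 (by omega)]
        constructor
        · rintro (⟨h3, -⟩ | ⟨-, h3⟩)
          · omega
          · exact (hT (i + 1) (by omega) (by omega)).mp h3
        · intro h3
          exact Or.inr ⟨by omega, (hT (i + 1) (by omega) (by omega)).mpr h3⟩

lemma good_iff (K : ℕ) : ∀ (js : List ℕ), (∀ j ∈ js, 1 ≤ j ∧ j ≤ K) →
    ∀ (d : Desc) (s s' : BarredState), Good K d s → Good K d s' →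
    (PlayableSeq s js ↔ PlayableSeq s' js) := by
  intro js
  induction js with
  | nil => intro _ d s s' _ _; simp [PlayableSeq]
  | cons j js ih =>
    intro hjs d s s' hg hg'
    obtain ⟨hj1, hjK⟩ := hjs j (List.mem_cons_self (a := j) (l := js))
    have hjs' : ∀ j ∈ js, 1 ≤ j ∧ j ≤ K := fun j hj => hjs j (List.mem_cons_of_mem _ hj)
    show j ∈ s.bars ∧ PlayableSeq (s.move j) js ↔ j ∈ s'.bars ∧ PlayableSeq (s'.move j) js
    have hb : j ∈ s.bars ↔ j ≤ d.b := hg.2.1 j hj1 hjK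
    have hb' : j ∈ s'.bars ↔ j ≤ d.b := hg'.2.1 j hj1 hjK
    by_cases hjb : j ≤ d.b
    · have := ih hjs' (step d j) (s.move j) (s'.move j)
        (step_good K d s hg j hj1 hjb) (step_good K d s' hg' j hj1 hjb)
      rw [hb, hb', this]
    · rw [hb, hb']
      simp [hjb]

/-- `(f_1, …, f_k)` is a `k`-fuse prefix: `f_i ∈ {1,2}` for `1 ≤ i ≤ k-1`, `f_k ≥ 3`,
and no two consecutive entries equal `1`. -/
def IsFusePrefix (k : ℕ) (f : ℕ → ℕ) : Prop :=
  (∀ i, 1 ≤ i → i ≤ k - 1 → f i = 1 ∨ f i = 2) ∧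
  3 ≤ f k ∧
  (∀ i, 1 ≤ i → i ≤ k - 1 → ¬(f i = 1 ∧ f (i + 1) = 1))

/-- A barred state has a `k`-fuse if `(μ_1, …, μ_k)` is a `k`-fuse prefix and
positions `1, …, k` are all barred. -/
def HasFuse (k : ℕ) (s : BarredState) : Prop :=
  IsFusePrefix k s.mu ∧ ∀ i, 1 ≤ i → i ≤ k → i ∈ s.bars

/-- If `s` and `s'` both have a `k`-fuse, then exactly the same sequences of moves
in positions `1, …, k` are playable from `s` and from `s'`: the fuse tree depends
only on `k`. -/
lemma fuse_good (k : ℕ) (hk : 1 ≤ k) (s : BarredState) (hs : HasFuse k s) :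
    Good k ⟨k, k, fun i => decide (i < k)⟩ s := by
  obtain ⟨⟨h12, h3, hcons⟩, hbars⟩ := hs
  refine ⟨le_refl k, ?_, ?_⟩
  · intro i hi1 hiK
    exact ⟨fun _ => hiK, fun _ => hbars i hi1 hiK⟩
  · intro _
    refine ⟨le_refl k, ?_, ?_, h3, ?_⟩
    · intro i hi1 hip
      have hip' : i ≤ k := hip
      by_cases h : i < k
      · rcases h12 i hi1 (by omega) with h | h <;> omega
      · have : i = k := by omega
        rw [this]; omega
    · intro i hi1 hip
      have hip' : i + 1 ≤ k := hip
      by_cases h : i + 1 < k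
      · rcases h12 i hi1 (by omega) with ha | ha <;>
          rcases h12 (i + 1) (by omega) (by omega) with hb | hb <;>
          [skip; omega; omega; omega]
        exact absurd ⟨ha, hb⟩ (hcons i hi1 (by omega))
      · have hik : i + 1 = k := by omega
        rw [hik]
        rcases h12 i hi1 (by omega) with h | h <;> omega
    · intro i hi1 hip
      have hip' : i ≤ k := hip
      by_cases h : i < k
      · simp only [decide_eq_true_eq]
        rcases h12 i hi1 (by omega) with h2 | h2 <;> simp [h] <;> omega
      · have : i = k := by omega
        subst this
        simp only [decide_eq_true_eq]
        constructor
        · intro h2; omega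
        · intro h2; omega

theorem stmt9 (k : ℕ) (hk : 1 ≤ k) (s s' : BarredState)
    (hs : HasFuse k s) (hs' : HasFuse k s') :
    ∀ js : List ℕ, (∀ j ∈ js, 1 ≤ j ∧ j ≤ k) →
      (PlayableSeq s js ↔ PlayableSeq s' js) := by
  intro js hjs
  exact good_iff k js hjs ⟨k, k, fun i => decide (i < k)⟩ s s'
    (fuse_good k hk s hs) (fuse_good k hk s' hs')
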